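/- For every natural number N and every real number μ, the function f_N has derivative at μ equal to D_N(μ) = e^{−μ} · ( μ^N / (N+1)! + Σ_{i=N+1}^{∞} (μ^i / i!) · ( N/i − N/(i+1) ) ). Moreover, for every μ ≥ 0 one has D_N(μ) ≥ 0. -/

import Mathlib

open Real

namespace UeAux

/-- coefficient -/
noncomputable def C (N i : ℕ) : ℝ := (((i : ℝ) - N) / i) / (Nat.factorial i : ℝ)

noncomputable def f (N i : ℕ) (x : ℝ) : ℝ := if N < i then C N i * x ^ i else 0

noncomputable def f' (N i : ℕ) (x : ℝ) : ℝ := if N < i then C N i * (i * x ^ (i - 1)) else 0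

lemma absC_le (N : ℕ) {i : ℕ} (h : N < i) : |C N i| ≤ 1 / (Nat.factorial i : ℝ) := by
  have hi : (0:ℝ) < i := by exact_mod_cast Nat.zero_lt_of_lt h
  have h1 : (0:ℝ) ≤ ((i:ℝ) - N) / i := by
    apply div_nonneg _ hi.le
    have : (N:ℝ) ≤ i := by exact_mod_cast h.le
    linarith
  have h2 : ((i:ℝ) - N) / i ≤ 1 := by
    rw [div_le_one hi]
    have : (0:ℝ) ≤ N := Nat.cast_nonneg N
    linarith
  have hfac : (0:ℝ) < (Nat.factorial i : ℝ) := by exact_mod_cast Nat.factorial_pos i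
  rw [C, abs_div, abs_of_nonneg h1, abs_of_pos hfac]
  exact by gcongr

lemma hasDerivAt_f (N i : ℕ) (x : ℝ) : HasDerivAt (f N i) (f' N i x) x := by
  unfold f f'
  split
  · exact (hasDerivAt_pow i x).const_mul (C N i)
  · exact hasDerivAt_const x 0

end UeAux

namespace UeAux

/-- bound for the derivative terms -/
noncomputable def u (R : ℝ) (i : ℕ) : ℝ := R ^ (i - 1) / (Nat.factorial (i - 1) : ℝ)

lemma summable_u (R : ℝ) : Summable (u R) := by
  rw [← summable_nat_add_iff 1]
  have : (fun n => u R (n + 1)) = fun n => R ^ n / (Nat.factorial n : ℝ) := by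
    funext n; simp [u]
  rw [this]
  exact Real.summable_pow_div_factorial R

lemma norm_f'_le (N i : ℕ) {x R : ℝ} (hx : |x| ≤ R) (hR : 0 ≤ R) : ‖f' N i x‖ ≤ u R i := by
  have hu : 0 ≤ u R i := div_nonneg (pow_nonneg hR _) (Nat.cast_nonneg _)
  unfold f'
  split
  · rename_i h
    have hi : 0 < i := Nat.zero_lt_of_lt h
    have hfac : (Nat.factorial i : ℝ) = i * Nat.factorial (i - 1) := by
      rw [← Nat.succ_pred_eq_of_pos hi]
      push_cast [Nat.factorial_succ]
      simp [Nat.succ_pred_eq_of_pos hi]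
    have h1 : ‖C N i * (↑i * x ^ (i - 1))‖ ≤ (1 / (Nat.factorial i : ℝ)) * (i * |x| ^ (i-1)) := by
      rw [norm_mul]
      apply mul_le_mul (absC_le N h) _ (norm_nonneg _) (by positivity)
      rw [norm_mul, norm_pow]
      simp [abs_of_nonneg (Nat.cast_nonneg (α := ℝ) i)]
    refine h1.trans ?_
    rw [hfac, u]
    have hip : (0:ℝ) < i := by exact_mod_cast hi
    have hfp : (0:ℝ) < (Nat.factorial (i-1) : ℝ) := by exact_mod_cast Nat.factorial_pos _
    have hxp : |x| ^ (i-1) ≤ R ^ (i-1) := pow_le_pow_left₀ (abs_nonneg x) hx _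
    rw [div_eq_mul_inv, div_eq_mul_inv]
    calc 1 / (↑i * ↑(Nat.factorial (i-1))) * (↑i * |x| ^ (i - 1))
        = |x| ^ (i-1) * (↑(Nat.factorial (i-1)))⁻¹ := by field_simp
      _ ≤ R ^ (i-1) * (↑(Nat.factorial (i-1)))⁻¹ := by gcongr
  · simpa using hu

lemma summable_f (N : ℕ) (x : ℝ) : Summable (fun i => f N i x) := by
  apply Summable.of_norm_bounded (Real.summable_pow_div_factorial |x|)
  intro i
  unfold f
  split
  · rename_i h
    rw [norm_mul, norm_pow]
    calc ‖C N i‖ * ‖x‖ ^ i ≤ (1 / (Nat.factorial i : ℝ)) * |x| ^ i := by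
          apply mul_le_mul (absC_le N h) le_rfl (by positivity) (by positivity)
      _ = |x| ^ i / (Nat.factorial i : ℝ) := by ring
  · simp; positivity

lemma summable_f' (N : ℕ) (x : ℝ) : Summable (fun i => f' N i x) := by
  apply Summable.of_norm_bounded (summable_u (|x|))
  intro i
  exact norm_f'_le N i le_rfl (abs_nonneg x)

lemma hasDerivAt_G (N : ℕ) (μ : ℝ) :
    HasDerivAt (fun x => ∑' i, f N i x) (∑' i, f' N i μ) μ := by
  set R := |μ| + 1 with hR
  have hRpos : 0 < R := by positivity
  have hμ : μ ∈ Metric.ball (0:ℝ) R := by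
    simp [Metric.mem_ball, Real.dist_eq, hR]
  refine hasDerivAt_tsum_of_isPreconnected (summable_u R) Metric.isOpen_ball
    (convex_ball (0:ℝ) R).isPreconnected (fun i y _ => hasDerivAt_f N i y)
    (fun i y hy => ?_) hμ (summable_f N μ) hμ
  have : |y| ≤ R := by
    rw [Metric.mem_ball, Real.dist_eq, sub_zero] at hy
    exact hy.le
  exact norm_f'_le N i this hRpos.le

end UeAux

namespace UeAux

lemma tterm_eq (N : ℕ) (μ : ℝ) (j : ℕ) :
    f' N (j+1) μ = (if j = N then μ ^ N / (Nat.factorial (N+1) : ℝ) else 0)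
      + (if N < j then μ ^ j / (Nat.factorial j : ℝ) * ((N:ℝ)/(j:ℝ) - (N:ℝ)/((j:ℝ)+1)) else 0)
      + f N j μ := by
  unfold f' f C
  rcases lt_trichotomy j N with h | h | h
  · have h1 : ¬ N < j + 1 := by omega
    have h2 : ¬ N < j := by omega
    have h3 : j ≠ N := by omega
    simp [h1, h2, h3]
  · subst h
    have h1 : j < j + 1 := Nat.lt_succ_self j
    have h2 : ¬ j < j := lt_irrefl j
    simp only [if_pos h1, if_neg h2, if_pos rfl, add_zero, zero_add]
    have hfac : (Nat.factorial (j+1) : ℝ) ≠ 0 := by exact_mod_cast (Nat.factorial_pos _).ne'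
    have hj1 : ((j:ℝ) + 1) ≠ 0 := by positivity
    push_cast
    field_simp
    ring
  · have h1 : N < j + 1 := by omega
    have h2 : N < j := h
    have h3 : j ≠ N := by omega
    simp only [if_pos h1, if_pos h2, if_neg h3, zero_add]
    have hj : (0:ℝ) < j := by exact_mod_cast Nat.zero_lt_of_lt h
    have hj0 : (j:ℝ) ≠ 0 := hj.ne'
    have hj1 : ((j:ℝ) + 1) ≠ 0 := by positivity
    have hfacj : (Nat.factorial j : ℝ) ≠ 0 := by exact_mod_cast (Nat.factorial_pos _).ne'
    have hfacs : (Nat.factorial (j+1) : ℝ) = ((j:ℝ)+1) * (Nat.factorial j : ℝ) := by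
      push_cast [Nat.factorial_succ]; ring
    rw [hfacs]
    push_cast
    field_simp
    ring

lemma summable_t (N : ℕ) (μ : ℝ) :
    Summable (fun j => if N < j then
      μ ^ j / (Nat.factorial j : ℝ) * ((N:ℝ)/(j:ℝ) - (N:ℝ)/((j:ℝ)+1)) else 0) := by
  have h1 : Summable (fun j => f' N (j+1) μ) := (summable_nat_add_iff (f := fun i => f' N i μ) 1).mpr (summable_f' N μ)
  have h2 : Summable (fun j : ℕ => if j = N then μ ^ N / (Nat.factorial (N+1) : ℝ) else 0) :=
    (hasSum_ite_eq N _).summable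
  have h3 := summable_f N μ
  have : (fun j => if N < j then
      μ ^ j / (Nat.factorial j : ℝ) * ((N:ℝ)/(j:ℝ) - (N:ℝ)/((j:ℝ)+1)) else 0)
      = fun j => f' N (j+1) μ - (if j = N then μ ^ N / (Nat.factorial (N+1) : ℝ) else 0)
        - f N j μ := by
    funext j
    rw [tterm_eq N μ j]
    ring
  rw [this]
  exact (h1.sub h2).sub h3

lemma G_key (N : ℕ) (μ : ℝ) :
    ∑' i, f' N i μ = μ ^ N / (Nat.factorial (N+1) : ℝ)
      + (∑' j : ℕ, if N < j then
          μ ^ j / (Nat.factorial j : ℝ) * ((N:ℝ)/(j:ℝ) - (N:ℝ)/((j:ℝ)+1)) else 0)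
      + ∑' i, f N i μ := by
  rw [Summable.tsum_eq_zero_add (summable_f' N μ)]
  have h0 : f' N 0 μ = 0 := by simp [f']
  rw [h0, zero_add]
  have : (fun j => f' N (j+1) μ) = fun j =>
      (if j = N then μ ^ N / (Nat.factorial (N+1) : ℝ) else 0)
      + ((if N < j then μ ^ j / (Nat.factorial j : ℝ) * ((N:ℝ)/(j:ℝ) - (N:ℝ)/((j:ℝ)+1)) else 0)
        + f N j μ) := by
    funext j; rw [tterm_eq N μ j]; ring
  rw [this, Summable.tsum_add (hasSum_ite_eq N _).summable ((summable_t N μ).add (summable_f N μ)),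
    Summable.tsum_add (summable_t N μ) (summable_f N μ), tsum_ite_eq]
  ring

end UeAux



/-- The UE access-limited blockage function
`f_N(μ) = Σ_{i=N+1}^{∞} (μ^i / i!) · e^{−μ} · (i − N)/i`. -/
noncomputable def ueBlock (N : ℕ) (μ : ℝ) : ℝ :=
  ∑' i : ℕ, if N < i then
    (μ ^ i / (Nat.factorial i : ℝ)) * Real.exp (-μ) * (((i : ℝ) - (N : ℝ)) / (i : ℝ))
  else 0

/-- `D_N(μ) = e^{−μ}·(μ^N/(N+1)! + Σ_{i=N+1}^∞ (μ^i/i!)·(N/i − N/(i+1)))`. -/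
noncomputable def ueBlockDeriv (N : ℕ) (μ : ℝ) : ℝ :=
  Real.exp (-μ) * (μ ^ N / (Nat.factorial (N + 1) : ℝ) +
    ∑' i : ℕ, if N < i then
      μ ^ i / (Nat.factorial i : ℝ) * ((N : ℝ) / (i : ℝ) - (N : ℝ) / ((i : ℝ) + 1))
    else 0)

open UeAux in
/-- `f_N` has derivative `D_N(μ)` at every `μ`, and `D_N(μ) ≥ 0` for every `μ ≥ 0`. -/
theorem stmt3 (N : ℕ) :
    (∀ μ : ℝ, HasDerivAt (ueBlock N) (ueBlockDeriv N μ) μ) ∧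
    (∀ μ : ℝ, 0 ≤ μ → 0 ≤ ueBlockDeriv N μ) := by
  constructor
  · intro μ
    have heq : ueBlock N = fun x => Real.exp (-x) * ∑' i, f N i x := by
      funext x
      rw [ueBlock, ← tsum_mul_left]
      congr 1
      funext i
      unfold f C
      rw [mul_ite, mul_zero]
      split
      · ring
      · rfl
    have hexp : HasDerivAt (fun x : ℝ => Real.exp (-x)) (-Real.exp (-μ)) μ := by
      have h := (hasDerivAt_neg μ).exp; rw [mul_neg_one] at h; exact h
    have hD := hexp.mul (hasDerivAt_G N μ)
    rw [heq]
    refine HasDerivAt.congr_deriv hD ?_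
    rw [G_key N μ, ueBlockDeriv]
    ring
  · intro μ hμ
    rw [ueBlockDeriv]
    apply mul_nonneg (Real.exp_pos _).le
    apply add_nonneg
    · positivity
    · apply tsum_nonneg
      intro i
      split
      · rename_i h
        have hi : (0:ℝ) < i := by exact_mod_cast Nat.zero_lt_of_lt h
        apply mul_nonneg (by positivity)
        rw [sub_nonneg]
        apply div_le_div_of_nonneg_left (Nat.cast_nonneg N) hi (by linarith)
      · exact le_rfl
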